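/- Let G be a triangulated Laman graph with N ≥ 2 vertices and let positive target distances {d̄_ij : (i,j)∈E} satisfy the triangle inequalities associated with G. Then the set T = {p ∈ P_G : ‖x_i−x_j‖ = d̄_ij for all (i,j) ∈ E} is nonempty, every configuration in T is strongly rigid, and T is the disjoint union of exactly 2^{N−2} orbits of the SE(2) action. -/

import Mathlib

open scoped BigOperators
open scoped Classical

noncomputable section

abbrev Plane : Type := EuclideanSpace ℝ (Fin 2)

abbrev Config (ι : Type) : Type := PiLp 2 (fun _ : ι => Plane)

def ConfigSpace {N : ℕ} (G : SimpleGraph (Fin N)) : Set (Config (Fin N)) :=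
  {p | ∀ i j : Fin N, G.Adj i j → p i ≠ p j}

noncomputable def formationField {ι : Type} [Fintype ι] (Adj : ι → ι → Prop)
    (f : ι → ι → ℝ → ℝ) (q : Config ι) : Config ι :=
  WithLp.toLp 2 fun v => ∑ u, if Adj v u then f v u ‖q v - q u‖ • (q u - q v) else 0

noncomputable def potential {N : ℕ} (G : SimpleGraph (Fin N)) (f : Fin N → Fin N → ℝ → ℝ)
    (p : Config (Fin N)) : ℝ :=
  ∑ i, ∑ j, if G.Adj i j ∧ i < j then ∫ t in (1:ℝ)..(‖p i - p j‖), t * f i j t else 0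

def MemU (f : ℝ → ℝ) : Prop :=
  ContDiffOn ℝ 1 f (Set.Ioi 0) ∧
  (∀ x : ℝ, 0 < x → 0 < deriv (fun t => t * f t) x) ∧
  (∃! d : ℝ, 0 < d ∧ f d = 0) ∧
  Filter.Tendsto (fun x : ℝ => ∫ t in x..(1:ℝ), t * f t) (nhdsWithin 0 (Set.Ioi 0)) Filter.atBot

def SO2 (θ : Matrix (Fin 2) (Fin 2) ℝ) : Prop :=
  θ ∈ Matrix.orthogonalGroup (Fin 2) ℝ ∧ θ.det = 1

noncomputable def rotAct {ι : Type} (θ : Matrix (Fin 2) (Fin 2) ℝ) (v : Plane) (p : Config ι) :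
    Config ι :=
  WithLp.toLp 2 fun i => Matrix.toEuclideanLin θ (p i) + v

def orbitSE2 {ι : Type} (p : Config ι) : Set (Config ι) :=
  {q | ∃ θ : Matrix (Fin 2) (Fin 2) ℝ, SO2 θ ∧ ∃ v : Plane, q = rotAct θ v p}

noncomputable def basisVec {ι : Type} [DecidableEq ι] (i : ι) (a : Fin 2) : Config ι :=
  WithLp.toLp 2 (Pi.single i (EuclideanSpace.single a (1:ℝ)))

noncomputable def hessMat {ι : Type} [Fintype ι] [DecidableEq ι] (Φ : Config ι → ℝ)
    (p : Config ι) : Matrix (ι × Fin 2) (ι × Fin 2) ℝ :=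
  Matrix.of fun q r => fderiv ℝ (fun x => fderiv ℝ Φ x (basisVec q.1 q.2)) p (basisVec r.1 r.2)

noncomputable def jacMat {ι : Type} [Fintype ι] [DecidableEq ι] (F : Config ι → Config ι)
    (p : Config ι) : Matrix (ι × Fin 2) (ι × Fin 2) ℝ :=
  Matrix.of fun q r => fderiv ℝ (fun x => F x q.1 q.2) p (basisVec r.1 r.2)

noncomputable def posIndex {n : Type} [Fintype n] [DecidableEq n] (A : Matrix n n ℝ) : ℕ :=
  Multiset.card (A.charpoly.roots.filter fun x => 0 < x)

noncomputable def negIndex {n : Type} [Fintype n] [DecidableEq n] (A : Matrix n n ℝ) : ℕ :=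
  Multiset.card (A.charpoly.roots.filter fun x => x < 0)

noncomputable def nullIndex {n : Type} [Fintype n] [DecidableEq n] (A : Matrix n n ℝ) : ℕ :=
  Multiset.card (A.charpoly.roots.filter fun x => x = 0)

inductive IsTriangulatedLaman : {N : ℕ} → SimpleGraph (Fin N) → Prop
  | base : IsTriangulatedLaman (⊤ : SimpleGraph (Fin 2))
  | grow {N : ℕ} (G' : SimpleGraph (Fin (N + 2))) (G : SimpleGraph (Fin (N + 3)))
      (j k : Fin (N + 2)) :
      IsTriangulatedLaman G' → G'.Adj j k →
      (∀ a b : Fin (N + 2), G.Adj a.castSucc b.castSucc ↔ G'.Adj a b) →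
      (∀ a : Fin (N + 2), G.Adj a.castSucc (Fin.last (N + 2)) ↔ a = j ∨ a = k) →
      IsTriangulatedLaman G

def StronglyRigid {N : ℕ} (G : SimpleGraph (Fin N)) (p : Config (Fin N)) : Prop :=
  ∀ i j k : Fin N, G.Adj i j → G.Adj i k → G.Adj j k →
    ¬ Collinear ℝ ({p i, p j, p k} : Set Plane)

def TriangleInequalities {N : ℕ} (G : SimpleGraph (Fin N)) (d : Fin N → Fin N → ℝ) : Prop :=
  ∀ i j k : Fin N, G.Adj i j → G.Adj i k → G.Adj j k → d j k < d i j + d i k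

def vertexSet {N : ℕ} (B : Finset (Sym2 (Fin N))) : Finset (Fin N) :=
  Finset.univ.filter fun v => ∃ e ∈ B, v ∈ e

def inducedSubgraph {N : ℕ} (B : Finset (Sym2 (Fin N))) : SimpleGraph ↥(vertexSet B) :=
  SimpleGraph.fromEdgeSet {e | Sym2.map Subtype.val e ∈ B}

def InducedTLaman {N : ℕ} (B : Finset (Sym2 (Fin N))) : Prop :=
  ∃ (M : ℕ) (H : SimpleGraph (Fin M)), IsTriangulatedLaman H ∧ Nonempty (inducedSubgraph B ≃g H)

def IsLineLamanPart {N : ℕ} (p : Config (Fin N)) (B : Finset (Sym2 (Fin N))) : Prop :=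
  InducedTLaman B ∧ Collinear ℝ (p '' (vertexSet B : Set (Fin N)))

def IsLineLamanPartition {N : ℕ} (G : SimpleGraph (Fin N)) (p : Config (Fin N))
    (P : Finset (Finset (Sym2 (Fin N)))) : Prop :=
  (∀ B ∈ P, B.Nonempty ∧ (B : Set (Sym2 (Fin N))) ⊆ G.edgeSet ∧ IsLineLamanPart p B) ∧
  ∀ e ∈ G.edgeSet, ∃! B, B ∈ P ∧ e ∈ B

def Refines {N : ℕ} (Q P : Finset (Finset (Sym2 (Fin N)))) : Prop :=
  ∀ B ∈ Q, ∃ C ∈ P, B ⊆ C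

def IsIndependentPartition {N : ℕ} (G : SimpleGraph (Fin N)) (p : Config (Fin N))
    (P : Finset (Finset (Sym2 (Fin N)))) : Prop :=
  IsLineLamanPartition G p P ∧ ∀ Q, IsLineLamanPartition G p Q → Refines Q P

def subConfig {N : ℕ} (p : Config (Fin N)) (B : Finset (Sym2 (Fin N))) :
    Config ↥(vertexSet B) :=
  WithLp.toLp 2 fun v => p v.1

noncomputable def subField {N : ℕ} (f : Fin N → Fin N → ℝ → ℝ) (B : Finset (Sym2 (Fin N))) :
    Config ↥(vertexSet B) → Config ↥(vertexSet B) :=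
  formationField (fun u v => s(u.1, v.1) ∈ B) (fun u v => f u.1 v.1)

def IsEquivariantMorse {N : ℕ} (G : SimpleGraph (Fin N)) (f : Fin N → Fin N → ℝ → ℝ) : Prop :=
  (∃ S : Finset (Config (Fin N)),
      {p | p ∈ ConfigSpace G ∧ formationField G.Adj f p = 0} = ⋃ q ∈ S, orbitSE2 q) ∧
  ∀ p, p ∈ ConfigSpace G → formationField G.Adj f p = 0 →
    nullIndex (jacMat (formationField G.Adj f) p) = 3

noncomputable def distMap {N : ℕ} (G : SimpleGraph (Fin N)) (p : Config (Fin N)) :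
    ↥G.edgeFinset → ℝ :=
  fun e => Sym2.lift ⟨fun i j => ‖p i - p j‖ ^ 2, fun i j => by dsimp only; rw [norm_sub_rev]⟩ e.1

namespace Work

noncomputable def pt (a b : ℝ) : Plane := (WithLp.equiv 2 _).symm ![a, b]

@[simp] lemma pt0 (a b : ℝ) : pt a b 0 = a := rfl
@[simp] lemma pt1 (a b : ℝ) : pt a b 1 = b := rfl

lemma plane_ext {x y : Plane} (h0 : x 0 = y 0) (h1 : x 1 = y 1) : x = y := by
  ext i; fin_cases i <;> assumption

lemma norm_sq (w : Plane) : ‖w‖^2 = w 0^2 + w 1^2 := by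
  rw [EuclideanSpace.norm_eq, Real.sq_sqrt (by positivity)]
  simp [Fin.sum_univ_two, sq_abs]

lemma norm_eq_iff {w : Plane} {d : ℝ} (hd : 0 ≤ d) :
    ‖w‖ = d ↔ w 0^2 + w 1^2 = d^2 := by
  constructor
  · intro h; rw [← norm_sq, h]
  · intro h
    have h2 : ‖w‖^2 = d^2 := by rw [norm_sq, h]
    nlinarith [norm_nonneg w]

def cross (u w : Plane) : ℝ := u 0 * w 1 - u 1 * w 0

lemma toE_apply (A : Matrix (Fin 2) (Fin 2) ℝ) (x : Plane) (i : Fin 2) :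
    Matrix.toEuclideanLin A x i = A i 0 * x 0 + A i 1 * x 1 := by
  simp [Matrix.toEuclideanLin_apply, Matrix.mulVec, dotProduct, Fin.sum_univ_two]
  fin_cases i <;> simp

lemma ortho_entries {θ : Matrix (Fin 2) (Fin 2) ℝ}
    (hθ : θ ∈ Matrix.orthogonalGroup (Fin 2) ℝ) :
    θ 0 0^2 + θ 1 0^2 = 1 ∧ θ 0 1^2 + θ 1 1^2 = 1 ∧ θ 0 0 * θ 0 1 + θ 1 0 * θ 1 1 = 0 := by
  have h := Matrix.mem_unitaryGroup_iff'.mp hθ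
  have e : ∀ i j, (star θ * θ) i j = (1 : Matrix (Fin 2) (Fin 2) ℝ) i j := fun i j => by rw [h]
  have e00 := e 0 0; have e11 := e 1 1; have e01 := e 0 1
  simp [Matrix.mul_apply, Fin.sum_univ_two, Matrix.one_apply, Matrix.star_eq_conjTranspose,
    Matrix.conjTranspose_apply] at e00 e11 e01
  refine ⟨by nlinarith, by nlinarith, by nlinarith⟩

lemma toE_norm {θ : Matrix (Fin 2) (Fin 2) ℝ}
    (hθ : θ ∈ Matrix.orthogonalGroup (Fin 2) ℝ) (w : Plane) :
    ‖Matrix.toEuclideanLin θ w‖ = ‖w‖ := by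
  obtain ⟨h1, h2, h3⟩ := ortho_entries hθ
  rw [norm_eq_iff (norm_nonneg w), toE_apply, toE_apply, norm_sq]
  linear_combination (w 0)^2 * h1 + (w 1)^2 * h2 + 2*(w 0)*(w 1)*h3

lemma cross_toE (θ : Matrix (Fin 2) (Fin 2) ℝ) (u w : Plane) :
    cross (Matrix.toEuclideanLin θ u) (Matrix.toEuclideanLin θ w) = θ.det * cross u w := by
  simp only [cross, toE_apply, Matrix.det_fin_two]; ring

end Work

namespace Work
open Matrix

lemma so2_one : SO2 1 := ⟨one_mem _, Matrix.det_one⟩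

lemma so2_mul {θ₁ θ₂ : Matrix (Fin 2) (Fin 2) ℝ} (h1 : SO2 θ₁) (h2 : SO2 θ₂) :
    SO2 (θ₁ * θ₂) :=
  ⟨mul_mem h1.1 h2.1, by rw [Matrix.det_mul, h1.2, h2.2, one_mul]⟩

lemma star_eq_transpose (θ : Matrix (Fin 2) (Fin 2) ℝ) : star θ = θᵀ := by
  ext i j; simp [Matrix.star_eq_conjTranspose, Matrix.conjTranspose_apply]

lemma so2_transpose {θ : Matrix (Fin 2) (Fin 2) ℝ} (h : SO2 θ) : SO2 θᵀ := by
  constructor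
  · rw [Matrix.mem_unitaryGroup_iff, star_eq_transpose, Matrix.transpose_transpose]
    have := Matrix.mem_unitaryGroup_iff'.mp h.1
    rwa [star_eq_transpose] at this
  · rw [Matrix.det_transpose]; exact h.2

lemma transpose_mul_self {θ : Matrix (Fin 2) (Fin 2) ℝ}
    (h : θ ∈ Matrix.orthogonalGroup (Fin 2) ℝ) : θᵀ * θ = 1 := by
  have := Matrix.mem_unitaryGroup_iff'.mp h
  rwa [star_eq_transpose] at this

lemma toE_mul (A B : Matrix (Fin 2) (Fin 2) ℝ) (x : Plane) :
    Matrix.toEuclideanLin (A * B) x = Matrix.toEuclideanLin A (Matrix.toEuclideanLin B x) := by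
  apply plane_ext <;> simp [toE_apply, Matrix.mul_apply, Fin.sum_univ_two] <;> ring

lemma toE_one (x : Plane) : Matrix.toEuclideanLin (1 : Matrix (Fin 2) (Fin 2) ℝ) x = x := by
  apply plane_ext <;> simp [toE_apply, Matrix.one_apply]

lemma rotAct_comp {ι : Type} (θ₁ θ₂ : Matrix (Fin 2) (Fin 2) ℝ) (v₁ v₂ : Plane)
    (p : Config ι) :
    rotAct θ₁ v₁ (rotAct θ₂ v₂ p) =
      rotAct (θ₁ * θ₂) (Matrix.toEuclideanLin θ₁ v₂ + v₁) p := by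
  refine PiLp.ext fun i => ?_
  simp only [rotAct, PiLp.toLp_apply, toE_mul, map_add]
  abel

lemma rotAct_id {ι : Type} (p : Config ι) : rotAct 1 0 p = p := by
  refine PiLp.ext fun i => ?_; simp [rotAct, toE_one]

lemma rotAct_inv_left {ι : Type} {θ : Matrix (Fin 2) (Fin 2) ℝ}
    (h : θ ∈ Matrix.orthogonalGroup (Fin 2) ℝ) (v : Plane) (p : Config ι) :
    rotAct θᵀ (-(Matrix.toEuclideanLin θᵀ v)) (rotAct θ v p) = p := by
  rw [rotAct_comp, transpose_mul_self h, add_neg_cancel, rotAct_id]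

lemma mem_orbit_self {ι : Type} (p : Config ι) : p ∈ orbitSE2 p :=
  ⟨1, so2_one, 0, (rotAct_id p).symm⟩

lemma mem_orbit_symm {ι : Type} {p q : Config ι} (h : q ∈ orbitSE2 p) : p ∈ orbitSE2 q := by
  obtain ⟨θ, hθ, v, rfl⟩ := h
  exact ⟨θᵀ, so2_transpose hθ, -(Matrix.toEuclideanLin θᵀ v),
    (rotAct_inv_left hθ.1 v p).symm⟩

lemma mem_orbit_trans {ι : Type} {p q r : Config ι} (h1 : q ∈ orbitSE2 p)
    (h2 : r ∈ orbitSE2 q) : r ∈ orbitSE2 p := by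
  obtain ⟨θ₁, hθ₁, v₁, rfl⟩ := h1
  obtain ⟨θ₂, hθ₂, v₂, rfl⟩ := h2
  exact ⟨θ₂ * θ₁, so2_mul hθ₂ hθ₁, _, rotAct_comp θ₂ θ₁ v₂ v₁ p⟩

lemma orbit_disjoint {ι : Type} {p q : Config ι} (h : p ∉ orbitSE2 q) :
    Disjoint (orbitSE2 p) (orbitSE2 q) := by
  rw [Set.disjoint_left]
  intro x hxp hxq
  exact h (mem_orbit_trans hxq (mem_orbit_symm hxp))

lemma rotAct_sub {ι : Type} (θ : Matrix (Fin 2) (Fin 2) ℝ) (v : Plane) (p : Config ι)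
    (i j : ι) : rotAct θ v p i - rotAct θ v p j = Matrix.toEuclideanLin θ (p i - p j) := by
  simp only [rotAct, PiLp.toLp_apply, map_sub]; abel

lemma rotAct_norm {ι : Type} {θ : Matrix (Fin 2) (Fin 2) ℝ}
    (h : θ ∈ Matrix.orthogonalGroup (Fin 2) ℝ) (v : Plane) (p : Config ι) (i j : ι) :
    ‖rotAct θ v p i - rotAct θ v p j‖ = ‖p i - p j‖ := by
  rw [rotAct_sub, toE_norm h]

/-- two-point transitivity -/
lemma exists_so2_two_point {a b a' b' : Plane} (hne : a ≠ b)
    (hab : ‖a - b‖ = ‖a' - b'‖) :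
    ∃ θ : Matrix (Fin 2) (Fin 2) ℝ, SO2 θ ∧ ∃ v : Plane,
      a' = Matrix.toEuclideanLin θ a + v ∧ b' = Matrix.toEuclideanLin θ b + v := by
  set u : Plane := b - a with hu
  set u' : Plane := b' - a' with hu'
  have hr2 : u 0^2 + u 1^2 = u' 0^2 + u' 1^2 := by
    have : ‖u‖ = ‖u'‖ := by
      rw [hu, hu', ← norm_neg (b - a), ← norm_neg (b' - a')]; simpa [norm_sub_rev] using hab
    have := congrArg (·^2) this
    simpa [norm_sq] using this
  have hune : u ≠ 0 := by
    rw [hu, sub_ne_zero]; exact fun h => hne h.symm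
  have hupos : 0 < u 0^2 + u 1^2 := by
    rcases eq_or_lt_of_le (by positivity : (0:ℝ) ≤ u 0^2 + u 1^2) with h | h
    · exfalso
      have h0 : u 0 = 0 := by nlinarith [sq_nonneg (u 0), sq_nonneg (u 1)]
      have h1 : u 1 = 0 := by nlinarith [sq_nonneg (u 0), sq_nonneg (u 1)]
      exact hune (by apply plane_ext <;> simp [h0, h1])
    · exact h
  obtain ⟨R, hR⟩ : ∃ R : ℝ, R = u 0^2 + u 1^2 := ⟨_, rfl⟩
  have hRpos : 0 < R := hR ▸ hupos
  obtain ⟨c, hc⟩ : ∃ c : ℝ, c = (u 0 * u' 0 + u 1 * u' 1) / R := ⟨_, rfl⟩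
  obtain ⟨s, hs⟩ : ∃ s : ℝ, s = (u 0 * u' 1 - u 1 * u' 0) / R := ⟨_, rfl⟩
  have hRne : (u 0^2 + u 1^2) ≠ 0 := ne_of_gt hupos
  have hcs : c^2 + s^2 = 1 := by
    rw [hc, hs, hR]
    field_simp
    linear_combination (-(u 0^2 + u 1^2)) * hr2
  obtain ⟨θ, hθdef⟩ : ∃ θ : Matrix (Fin 2) (Fin 2) ℝ, θ = !![c, -s; s, c] := ⟨_, rfl⟩
  have hso2 : SO2 θ := by
    constructor
    · rw [Matrix.mem_unitaryGroup_iff']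
      ext i j
      fin_cases i <;> fin_cases j <;>
        simp [hθdef, Matrix.mul_apply, Fin.sum_univ_two, Matrix.one_apply, Matrix.star_apply] <;>
        ring_nf <;> try linarith [hcs]
    · rw [hθdef, Matrix.det_fin_two_of]; linarith [hcs]
  have hθu : Matrix.toEuclideanLin θ u = u' := by
    apply plane_ext <;>
      · rw [toE_apply]
        simp [hθdef]
        rw [hc, hs, hR]
        field_simp
        ring
  refine ⟨θ, hso2, a' - Matrix.toEuclideanLin θ a, by abel, ?_⟩
  have h2 : Matrix.toEuclideanLin θ b - Matrix.toEuclideanLin θ a = u' := by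
    rw [← map_sub, ← hu, hθu]
  have hb' : b' = u' + a' := by rw [hu']; abel
  rw [hb', ← h2]; abel

end Work

namespace Work

noncomputable def circlePt (a b : Plane) (d1 d2 : ℝ) (ε : Bool) : Plane :=
  a + ((‖b-a‖^2 + d1^2 - d2^2)/(2*‖b-a‖) / ‖b-a‖) • (b - a) +
    ((if ε then Real.sqrt (d1^2 - ((‖b-a‖^2 + d1^2 - d2^2)/(2*‖b-a‖))^2)
      else -Real.sqrt (d1^2 - ((‖b-a‖^2 + d1^2 - d2^2)/(2*‖b-a‖))^2)) / ‖b-a‖) •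
    pt (-((b-a) 1)) ((b-a) 0)

lemma circlePt_spec (a b : Plane) (d1 d2 r : ℝ) (hr : ‖b - a‖ = r) (hrpos : 0 < r)
    (hd1 : 0 < d1) (hd2 : 0 < d2) (t1 : r < d1 + d2) (t2 : d1 < r + d2) (t3 : d2 < r + d1) :
    (∀ ε, ‖circlePt a b d1 d2 ε - a‖ = d1 ∧ ‖circlePt a b d1 d2 ε - b‖ = d2) ∧
    (0 < cross (b - a) (circlePt a b d1 d2 true - a)) ∧
    (cross (b - a) (circlePt a b d1 d2 false - a) < 0) ∧
    (∀ x : Plane, ‖x - a‖ = d1 → ‖x - b‖ = d2 →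
      x = circlePt a b d1 d2 true ∨ x = circlePt a b d1 d2 false) := by
  have hrne : r ≠ 0 := ne_of_gt hrpos
  obtain ⟨α, hα⟩ : ∃ α : ℝ, α = (r^2 + d1^2 - d2^2)/(2*r) := ⟨_, rfl⟩
  have key1 : 2*r*(d1+α) = (r+d1)^2 - d2^2 := by rw [hα]; field_simp; ring
  have key2 : 2*r*(d1-α) = d2^2 - (r-d1)^2 := by rw [hα]; field_simp; ring
  have e1 : 0 < d1 + α := by nlinarith
  have e2 : 0 < d1 - α := by nlinarith
  have hα2 : α^2 < d1^2 := by nlinarith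
  obtain ⟨h, hh⟩ : ∃ h : ℝ, h = Real.sqrt (d1^2 - α^2) := ⟨_, rfl⟩
  have hhpos : 0 < h := by rw [hh]; exact Real.sqrt_pos.mpr (by linarith)
  have hh2 : h^2 = d1^2 - α^2 := by rw [hh]; exact Real.sq_sqrt (by linarith)
  have hw' : (b 0 - a 0)^2 + (b 1 - a 1)^2 = r^2 := by
    have := (norm_eq_iff (le_of_lt hrpos)).mp hr
    simpa [PiLp.sub_apply] using this
  have hαr : 2*(α*r) = r^2 + d1^2 - d2^2 := by rw [hα]; field_simp
  have cp0 : ∀ ε : Bool, circlePt a b d1 d2 ε 0 =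
      a 0 + (α / r) * (b 0 - a 0) + ((if ε then h else -h) / r) * (-(b 1 - a 1)) := by
    intro ε
    simp only [circlePt, PiLp.add_apply, PiLp.smul_apply, smul_eq_mul, pt0, pt1,
      PiLp.sub_apply]
    rw [hr, ← hα, ← hh]
  have cp1 : ∀ ε : Bool, circlePt a b d1 d2 ε 1 =
      a 1 + (α / r) * (b 1 - a 1) + ((if ε then h else -h) / r) * (b 0 - a 0) := by
    intro ε
    simp only [circlePt, PiLp.add_apply, PiLp.smul_apply, smul_eq_mul, pt0, pt1,
      PiLp.sub_apply]
    rw [hr, ← hα, ← hh]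
  have cp0t : circlePt a b d1 d2 true 0 = a 0 + (α / r) * (b 0 - a 0) + (h / r) * (-(b 1 - a 1)) := by
    simpa using cp0 true
  have cp1t : circlePt a b d1 d2 true 1 = a 1 + (α / r) * (b 1 - a 1) + (h / r) * (b 0 - a 0) := by
    simpa using cp1 true
  have cp0f : circlePt a b d1 d2 false 0 = a 0 + (α / r) * (b 0 - a 0) + (-h / r) * (-(b 1 - a 1)) := by
    simpa using cp0 false
  have cp1f : circlePt a b d1 d2 false 1 = a 1 + (α / r) * (b 1 - a 1) + (-h / r) * (b 0 - a 0) := by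
    simpa using cp1 false
  refine ⟨?_, ?_, ?_, ?_⟩
  · intro ε
    constructor
    · rw [norm_eq_iff hd1.le]
      cases ε <;>
        [ simp only [PiLp.sub_apply, cp0f, cp1f];
          simp only [PiLp.sub_apply, cp0t, cp1t]] <;>
        · field_simp
          linear_combination (α^2 + h^2) * hw' + (r^2) * hh2
    · rw [norm_eq_iff hd2.le]
      cases ε <;>
        [ simp only [PiLp.sub_apply, cp0f, cp1f];
          simp only [PiLp.sub_apply, cp0t, cp1t]] <;>
        · field_simp
          linear_combination ((α - r)^2 + h^2) * hw' + (r^2) * hh2 - (r^2) * hαr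
  · have hcr : cross (b - a) (circlePt a b d1 d2 true - a) = h * r := by
      simp only [cross, PiLp.sub_apply, cp0t, cp1t]
      field_simp
      linear_combination h * hw'
    rw [hcr]; positivity
  · have hcr : cross (b - a) (circlePt a b d1 d2 false - a) = -(h * r) := by
      simp only [cross, PiLp.sub_apply, cp0f, cp1f]
      field_simp
      linear_combination -h * hw'
    rw [hcr]
    simp only [neg_neg, Left.neg_neg_iff]
    positivity
  · intro x hx1 hx2
    have hy1 : (x 0 - a 0)^2 + (x 1 - a 1)^2 = d1^2 := by
      have := (norm_eq_iff hd1.le).mp hx1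
      simpa [PiLp.sub_apply] using this
    have hy2 : (x 0 - b 0)^2 + (x 1 - b 1)^2 = d2^2 := by
      have := (norm_eq_iff hd2.le).mp hx2
      simpa [PiLp.sub_apply] using this
    have hdot : (x 0 - a 0) * (b 0 - a 0) + (x 1 - a 1) * (b 1 - a 1) = α * r := by
      linear_combination hy1/2 + hw'/2 - hy2/2 - hαr/2
    have hQ : ((x 1 - a 1) * (b 0 - a 0) - (x 0 - a 0) * (b 1 - a 1))^2 = (h*r)^2 := by
      have lag : ((x 1 - a 1) * (b 0 - a 0) - (x 0 - a 0) * (b 1 - a 1))^2 =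
          ((x 0 - a 0)^2 + (x 1 - a 1)^2) * ((b 0 - a 0)^2 + (b 1 - a 1)^2) -
          ((x 0 - a 0) * (b 0 - a 0) + (x 1 - a 1) * (b 1 - a 1))^2 := by ring
      rw [lag, hy1, hw', hdot]
      linear_combination - r^2 * hh2
    have hfac := mul_eq_zero.mp (by linear_combination hQ :
      (((x 1 - a 1) * (b 0 - a 0) - (x 0 - a 0) * (b 1 - a 1)) - h*r) *
      (((x 1 - a 1) * (b 0 - a 0) - (x 0 - a 0) * (b 1 - a 1)) + h*r) = 0)
    have main : ∀ t : ℝ, ((x 1 - a 1) * (b 0 - a 0) - (x 0 - a 0) * (b 1 - a 1)) = t*r →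
        x 0 = a 0 + α / r * (b 0 - a 0) + t / r * (-(b 1 - a 1)) ∧
        x 1 = a 1 + α / r * (b 1 - a 1) + t / r * (b 0 - a 0) := by
      intro t hQe
      have key0 : (x 0 - a 0) * r * r = (α*r*(b 0 - a 0) - (t*r)*(b 1 - a 1)) * 1 := by
        linear_combination (b 0 - a 0)*hdot - (b 1 - a 1)*hQe - (x 0 - a 0)*hw'
      have key1 : (x 1 - a 1) * r * r = (α*r*(b 1 - a 1) + (t*r)*(b 0 - a 0)) * 1 := by
        linear_combination (b 1 - a 1)*hdot + (b 0 - a 0)*hQe - (x 1 - a 1)*hw'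
      constructor
      · have e2 : x 0 - a 0 = (α*(b 0 - a 0) - t*(b 1 - a 1))/r := by
          rw [eq_div_iff hrne]
          apply mul_right_cancel₀ hrne
          linear_combination key0
        have expand : a 0 + α / r * (b 0 - a 0) + t / r * (-(b 1 - a 1)) =
            a 0 + (α*(b 0 - a 0) - t*(b 1 - a 1))/r := by
          field_simp; ring
        rw [expand]; linarith [e2]
      · have e2 : x 1 - a 1 = (α*(b 1 - a 1) + t*(b 0 - a 0))/r := by
          rw [eq_div_iff hrne]
          apply mul_right_cancel₀ hrne
          linear_combination key1
        have expand : a 1 + α / r * (b 1 - a 1) + t / r * (b 0 - a 0) =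
            a 1 + (α*(b 1 - a 1) + t*(b 0 - a 0))/r := by
          field_simp; ring
        rw [expand]; linarith [e2]
    rcases hfac with hQ' | hQ'
    · left
      obtain ⟨m0, m1⟩ := main h (by linear_combination hQ')
      exact plane_ext (by rw [cp0t]; exact m0) (by rw [cp1t]; exact m1)
    · right
      obtain ⟨m0, m1⟩ := main (-h) (by linear_combination hQ')
      exact plane_ext (by rw [cp0f]; exact m0) (by rw [cp1f]; exact m1)

end Work

namespace Work

lemma abs3 (s t : ℝ) :
    |s - t| = |s| + |t| ∨ |s| = |s - t| + |t| ∨ |t| = |s - t| + |s| := by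
  rcases abs_cases s with ⟨hs, hs'⟩ | ⟨hs, hs'⟩ <;>
    rcases abs_cases t with ⟨ht, ht'⟩ | ⟨ht, ht'⟩ <;>
    rcases abs_cases (s - t) with ⟨hst, hst'⟩ | ⟨hst, hst'⟩ <;>
    first
      | (left; linarith)
      | (right; left; linarith)
      | (right; right; linarith)

lemma collinear_dist {x y z : Plane} (h : Collinear ℝ ({x, y, z} : Set Plane)) :
    ‖y - z‖ = ‖x - y‖ + ‖x - z‖ ∨ ‖x - y‖ = ‖y - z‖ + ‖x - z‖ ∨
    ‖x - z‖ = ‖x - y‖ + ‖y - z‖ := by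
  have hx : x ∈ ({x, y, z} : Set Plane) := by simp
  obtain ⟨v, hv⟩ := (collinear_iff_of_mem hx).mp h
  obtain ⟨s, hs⟩ := hv y (by simp)
  obtain ⟨t, ht⟩ := hv z (by simp)
  have hxy : ‖x - y‖ = |s| * ‖v‖ := by
    rw [hs, vadd_eq_add]; rw [show x - (s • v + x) = -(s • v) by abel, norm_neg, norm_smul,
      Real.norm_eq_abs]
  have hxz : ‖x - z‖ = |t| * ‖v‖ := by
    rw [ht, vadd_eq_add]; rw [show x - (t • v + x) = -(t • v) by abel, norm_neg, norm_smul,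
      Real.norm_eq_abs]
  have hyz : ‖y - z‖ = |s - t| * ‖v‖ := by
    rw [hs, ht, vadd_eq_add, vadd_eq_add]; rw [show (s • v + x) - (t • v + x) = (s - t) • v by rw [sub_smul]; abel,
      norm_smul, Real.norm_eq_abs]
  rcases abs3 s t with h1 | h1 | h1
  · left; rw [hxy, hxz, hyz, h1]; ring
  · right; left; rw [hxy, hxz, hyz, h1]; ring
  · right; right; rw [hxy, hxz, hyz, h1]; ring

def T {N : ℕ} (G : SimpleGraph (Fin N)) (d : Fin N → Fin N → ℝ) : Set (Config (Fin N)) :=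
  {p | ∀ i j, G.Adj i j → ‖p i - p j‖ = d i j}

lemma T_act {N : ℕ} {G : SimpleGraph (Fin N)} {d : Fin N → Fin N → ℝ} {p : Config (Fin N)}
    (hp : p ∈ T G d) {θ : Matrix (Fin 2) (Fin 2) ℝ} (hθ : SO2 θ) (v : Plane) :
    rotAct θ v p ∈ T G d := by
  intro i j hij
  rw [rotAct_norm hθ.1]
  exact hp i j hij

lemma orbit_sub_T {N : ℕ} {G : SimpleGraph (Fin N)} {d : Fin N → Fin N → ℝ}
    {p : Config (Fin N)} (hp : p ∈ T G d) : orbitSE2 p ⊆ T G d := by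
  rintro q ⟨θ, hθ, v, rfl⟩
  exact T_act hp hθ v

lemma set_eq_T {N : ℕ} (G : SimpleGraph (Fin N)) (d : Fin N → Fin N → ℝ)
    (hdpos : ∀ i j, G.Adj i j → 0 < d i j) :
    {p : Config (Fin N) | p ∈ ConfigSpace G ∧ ∀ i j, G.Adj i j → ‖p i - p j‖ = d i j} =
      T G d := by
  ext p
  constructor
  · rintro ⟨_, h2⟩; exact h2
  · intro h
    refine ⟨fun i j hij hne => ?_, h⟩
    have := h i j hij
    have hpos := hdpos i j hij
    rw [hne] at this
    simp at this
    linarith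
end Work

namespace Work
open Matrix

lemma rotAct_inv_right {ι : Type} {θ : Matrix (Fin 2) (Fin 2) ℝ} (hθ : SO2 θ)
    (v : Plane) (p : Config ι) :
    rotAct θ v (rotAct θᵀ (-(Matrix.toEuclideanLin θᵀ v)) p) = p := by
  rw [rotAct_comp]
  have h1 : θ * θᵀ = 1 := by
    have := Matrix.mem_unitaryGroup_iff.mp hθ.1
    rwa [star_eq_transpose] at this
  have h2 : Matrix.toEuclideanLin θ (-(Matrix.toEuclideanLin θᵀ v)) + v = 0 := by
    rw [map_neg, ← toE_mul, h1, toE_one]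
    abel
  rw [h1, h2, rotAct_id]

lemma main {N : ℕ} {G : SimpleGraph (Fin N)} (hG : IsTriangulatedLaman G) :
    ∀ d : Fin N → Fin N → ℝ, (∀ i j, d i j = d j i) → (∀ i j, G.Adj i j → 0 < d i j) →
    TriangleInequalities G d →
    ∃ S : Finset (Config (Fin N)), S.card = 2^(N-2) ∧
      (↑S : Set (Config (Fin N))).Pairwise (fun a b => Disjoint (orbitSE2 a) (orbitSE2 b)) ∧
      T G d = ⋃ q ∈ S, orbitSE2 q := by
  induction hG with
  | base =>
    intro d hdsym hdpos htri
    have hadj : (⊤ : SimpleGraph (Fin 2)).Adj 0 1 := by simp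
    have hD : 0 < d 0 1 := hdpos 0 1 hadj
    obtain ⟨q0, hq0⟩ : ∃ q0 : Config (Fin 2),
        q0 = WithLp.toLp 2 (fun i => if i = 0 then pt 0 0 else pt (d 0 1) 0) := ⟨_, rfl⟩
    have hq00 : q0 0 = pt 0 0 := by rw [hq0]; norm_num
    have hq01 : q0 1 = pt (d 0 1) 0 := by rw [hq0]; norm_num
    have hnorm : ‖q0 0 - q0 1‖ = d 0 1 := by
      rw [hq00, hq01, norm_eq_iff hD.le]
      simp [PiLp.sub_apply]
    have hnorm' : ‖q0 1 - q0 0‖ = d 1 0 := by rw [norm_sub_rev, hnorm, hdsym]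
    have hq0T : q0 ∈ T ⊤ d := by
      intro i j hij
      have hne : i ≠ j := hij.ne
      fin_cases i <;> fin_cases j <;>
        first
          | (exact absurd rfl hne)
          | exact hnorm
          | exact hnorm'
    refine ⟨{q0}, by simp, by simp, ?_⟩
    ext p
    simp only [Finset.mem_singleton, Set.mem_iUnion, exists_prop, exists_eq_left]
    constructor
    · intro hp
      have h01 : ‖p 0 - p 1‖ = d 0 1 := hp 0 1 hadj
      have hne : q0 0 ≠ q0 1 := by
        intro h
        rw [h, sub_self, norm_zero] at hnorm
        linarith
      obtain ⟨θ, hθ, v, h1, h2⟩ :=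
        exists_so2_two_point (a' := p 0) (b' := p 1) hne (hnorm.trans h01.symm)
      refine ⟨θ, hθ, v, ?_⟩
      refine PiLp.ext fun i => ?_
      fin_cases i
      · exact h1
      · exact h2
    · intro hq
      exact orbit_sub_T hq0T hq
  | @grow N G' G j k hG' hjk hGG1 hGG2 ih =>
    intro d hdsym hdpos htri
    obtain ⟨S', hcard', hdisj', hT'⟩ :=
      ih (fun a b => d a.castSucc b.castSucc) (fun a b => hdsym _ _)
        (fun a b hab => hdpos _ _ ((hGG1 a b).mpr hab))
        (fun a b c h1 h2 h3 =>
          htri _ _ _ ((hGG1 _ _).mpr h1) ((hGG1 _ _).mpr h2) ((hGG1 _ _).mpr h3))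
    have hajk : G.Adj j.castSucc k.castSucc := (hGG1 j k).mpr hjk
    have hajn : G.Adj j.castSucc (Fin.last (N+2)) := (hGG2 j).mpr (Or.inl rfl)
    have hakn : G.Adj k.castSucc (Fin.last (N+2)) := (hGG2 k).mpr (Or.inr rfl)
    have hrpos : 0 < d j.castSucc k.castSucc := hdpos _ _ hajk
    have hdjpos : 0 < d j.castSucc (Fin.last (N+2)) := hdpos _ _ hajn
    have hdkpos : 0 < d k.castSucc (Fin.last (N+2)) := hdpos _ _ hakn
    have tri1 : d j.castSucc k.castSucc <
        d j.castSucc (Fin.last (N+2)) + d k.castSucc (Fin.last (N+2)) := by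
      have := htri (Fin.last (N+2)) j.castSucc k.castSucc hajn.symm hakn.symm hajk
      rwa [hdsym (Fin.last (N+2)) j.castSucc, hdsym (Fin.last (N+2)) k.castSucc] at this
    have tri2 : d j.castSucc (Fin.last (N+2)) <
        d j.castSucc k.castSucc + d k.castSucc (Fin.last (N+2)) := by
      have := htri k.castSucc j.castSucc (Fin.last (N+2)) hajk.symm hakn hajn
      rwa [hdsym k.castSucc j.castSucc] at this
    have tri3 : d k.castSucc (Fin.last (N+2)) <
        d j.castSucc k.castSucc + d j.castSucc (Fin.last (N+2)) :=
      htri j.castSucc k.castSucc (Fin.last (N+2)) hajk hajn hakn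
    obtain ⟨ext, hext⟩ : ∃ e : Config (Fin (N+2)) × Bool → Config (Fin (N+3)),
        e = fun z => WithLp.toLp 2 (Fin.snoc (α := fun _ => Plane) (fun a => z.1 a) (circlePt (z.1 j) (z.1 k)
          (d j.castSucc (Fin.last (N+2))) (d k.castSucc (Fin.last (N+2))) z.2)) := ⟨_, rfl⟩
    have hS'T : ∀ q' ∈ S', q' ∈ T G' (fun a b => d a.castSucc b.castSucc) := by
      intro q' hq'
      have : q' ∈ ⋃ q ∈ S', orbitSE2 q := Set.mem_biUnion hq' (mem_orbit_self q')
      rwa [← hT'] at this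
    have hba : ∀ q', q' ∈ T G' (fun a b => d a.castSucc b.castSucc) →
        ‖q' k - q' j‖ = d j.castSucc k.castSucc := by
      intro q' hq'
      have h := hq' k j hjk.symm
      exact h.trans (hdsym k.castSucc j.castSucc)
    have hextT : ∀ q', q' ∈ T G' (fun a b => d a.castSucc b.castSucc) → ∀ ε : Bool,
        ext (q', ε) ∈ T G d := by
      intro q' hq' ε
      obtain ⟨hdist, _, _, _⟩ := circlePt_spec (q' j) (q' k) _ _ _ (hba q' hq')
        hrpos hdjpos hdkpos tri1 tri2 tri3
      intro i i' hadj
      rcases Fin.eq_castSucc_or_eq_last i with ⟨a, rfl⟩ | rfl <;>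
        rcases Fin.eq_castSucc_or_eq_last i' with ⟨b, rfl⟩ | rfl
      · rw [hext]
        simp only [Fin.snoc_castSucc]
        exact hq' a b ((hGG1 a b).mp hadj)
      · rw [hext]
        simp only [Fin.snoc_castSucc, Fin.snoc_last]
        rcases (hGG2 a).mp hadj with rfl | rfl
        · rw [norm_sub_rev]; exact (hdist ε).1
        · rw [norm_sub_rev]; exact (hdist ε).2
      · rw [hext]
        simp only [Fin.snoc_castSucc, Fin.snoc_last]
        rcases (hGG2 b).mp hadj.symm with rfl | rfl
        · rw [hdsym (Fin.last (N+2)) b.castSucc]; exact (hdist ε).1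
        · rw [hdsym (Fin.last (N+2)) b.castSucc]; exact (hdist ε).2
      · exact absurd hadj (G.loopless.irrefl _)
    have hinj : Set.InjOn ext ↑(S' ×ˢ (Finset.univ : Finset Bool)) := by
      intro z1 hz1 z2 hz2 he
      have hz1' : z1.1 ∈ S' := (Finset.mem_product.mp (Finset.mem_coe.mp hz1)).1
      have h1 : z1.1 = z2.1 := by
        refine PiLp.ext fun a => ?_
        have := congrArg (fun x : Config (Fin (N+3)) => x a.castSucc) he
        rw [hext] at this
        simpa [Fin.snoc_castSucc] using this
      have h2 : circlePt (z1.1 j) (z1.1 k) (d j.castSucc (Fin.last (N+2)))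
          (d k.castSucc (Fin.last (N+2))) z1.2 =
          circlePt (z1.1 j) (z1.1 k) (d j.castSucc (Fin.last (N+2)))
          (d k.castSucc (Fin.last (N+2))) z2.2 := by
        have := congrArg (fun x : Config (Fin (N+3)) => x (Fin.last (N+2))) he
        rw [hext] at this
        simp only [PiLp.toLp_apply, Fin.snoc_last] at this
        rw [← h1] at this
        exact this
      have hT1 := hS'T z1.1 hz1'
      obtain ⟨_, hpos, hneg, _⟩ := circlePt_spec (z1.1 j) (z1.1 k) _ _ _ (hba _ hT1)
        hrpos hdjpos hdkpos tri1 tri2 tri3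
      have hb : z1.2 = z2.2 := by
        cases hε1 : z1.2 <;> cases hε2 : z2.2 <;> try rfl
        · exfalso; rw [hε1, hε2] at h2; rw [h2] at hneg; linarith
        · exfalso; rw [hε1, hε2] at h2; rw [h2] at hpos; linarith
      exact Prod.ext h1 hb
    refine ⟨Finset.image ext (S' ×ˢ (Finset.univ : Finset Bool)), ?_, ?_, ?_⟩
    · rw [Finset.card_image_of_injOn hinj, Finset.card_product, hcard', Finset.card_univ,
        Fintype.card_bool]
      show 2^N * 2 = 2^(N+1)
      rw [pow_succ]
    · -- pairwise disjoint
      intro a ha b hb hne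
      apply orbit_disjoint
      intro hab
      obtain ⟨θ, hθ, v, haρ⟩ := hab
      obtain ⟨z1, hz1, rfl⟩ := Finset.mem_image.mp (Finset.mem_coe.mp ha)
      obtain ⟨z2, hz2, rfl⟩ := Finset.mem_image.mp (Finset.mem_coe.mp hb)
      obtain ⟨q1, ε1⟩ := z1
      obtain ⟨q2, ε2⟩ := z2
      have hq1S : q1 ∈ S' := (Finset.mem_product.mp hz1).1
      have hq2S : q2 ∈ S' := (Finset.mem_product.mp hz2).1
      have hq12 : q1 = rotAct θ v q2 := by
        refine PiLp.ext fun a => ?_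
        have h := congrArg (fun x : Config (Fin (N+3)) => x a.castSucc) haρ
        rw [hext] at h
        simp only [PiLp.toLp_apply, Fin.snoc_castSucc] at h
        have h' : rotAct θ v (WithLp.toLp 2 (Fin.snoc (α := fun _ => Plane) (fun a => q2 a) (circlePt (q2 j) (q2 k)
            (d j.castSucc (Fin.last (N+2))) (d k.castSucc (Fin.last (N+2))) ε2))) a.castSucc =
            rotAct θ v q2 a := by
          show Matrix.toEuclideanLin θ _ + v = Matrix.toEuclideanLin θ _ + v
          simp only [PiLp.toLp_apply, Fin.snoc_castSucc]
        rw [h'] at h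
        exact h
      have heq1 : q1 = q2 := by
        by_contra hne'
        have hd := hdisj' (Finset.mem_coe.mpr hq1S) (Finset.mem_coe.mpr hq2S) hne'
        exact Set.disjoint_left.mp hd (mem_orbit_self q1) ⟨θ, hθ, v, hq12⟩
      subst heq1
      have hεne : ε1 ≠ ε2 := by
        intro h; subst h; exact hne rfl
      have hT1 := hS'T q1 hq1S
      obtain ⟨_, hpos, hneg, _⟩ := circlePt_spec (q1 j) (q1 k) _ _ _ (hba _ hT1)
        hrpos hdjpos hdkpos tri1 tri2 tri3
      have hcross : cross (ext (q1,ε1) k.castSucc - ext (q1,ε1) j.castSucc)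
          (ext (q1,ε1) (Fin.last (N+2)) - ext (q1,ε1) j.castSucc) =
          cross (ext (q1,ε2) k.castSucc - ext (q1,ε2) j.castSucc)
          (ext (q1,ε2) (Fin.last (N+2)) - ext (q1,ε2) j.castSucc) := by
        rw [haρ]
        simp only [rotAct_sub]
        rw [cross_toE, hθ.2, one_mul]
      rw [hext] at hcross
      simp only [Fin.snoc_castSucc, Fin.snoc_last] at hcross
      cases ε1 <;> cases ε2
      · exact hεne rfl
      · linarith [hcross, hpos, hneg]
      · linarith [hcross, hpos, hneg]
      · exact hεne rfl
    · -- union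
      apply Set.Subset.antisymm
      · intro p hp
        have hp' : (WithLp.toLp 2 (fun a : Fin (N+2) => p a.castSucc)) ∈ T G' (fun a b => d a.castSucc b.castSucc) :=
          fun a b hab => hp _ _ ((hGG1 a b).mpr hab)
        have hmem : (WithLp.toLp 2 (fun a : Fin (N+2) => p a.castSucc)) ∈ ⋃ q ∈ S', orbitSE2 q := by
          rw [← hT']; exact hp'
        obtain ⟨q', hq'S, hq'orb⟩ := Set.mem_iUnion₂.mp hmem
        obtain ⟨θ, hθ, v, hpq⟩ := hq'orb
        obtain ⟨p2, hp2⟩ : ∃ x : Config (Fin (N+3)),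
            x = rotAct θᵀ (-(Matrix.toEuclideanLin θᵀ v)) p := ⟨_, rfl⟩
        have hp2T : p2 ∈ T G d := by
          rw [hp2]; exact T_act hp (so2_transpose hθ) _
        have hres : ∀ a : Fin (N+2), p2 a.castSucc = q' a := by
          intro a
          rw [hp2]
          have h1 : (rotAct θᵀ (-(Matrix.toEuclideanLin θᵀ v)) p) a.castSucc =
              (rotAct θᵀ (-(Matrix.toEuclideanLin θᵀ v)) (WithLp.toLp 2 (fun a : Fin (N+2) => p a.castSucc))) a := rfl
          rw [h1, hpq, rotAct_inv_left hθ.1]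
        have hxj : ‖p2 (Fin.last (N+2)) - q' j‖ = d j.castSucc (Fin.last (N+2)) := by
          have h := hp2T j.castSucc (Fin.last (N+2)) hajn
          rw [hres j] at h
          rwa [norm_sub_rev] at h
        have hxk : ‖p2 (Fin.last (N+2)) - q' k‖ = d k.castSucc (Fin.last (N+2)) := by
          have h := hp2T k.castSucc (Fin.last (N+2)) hakn
          rw [hres k] at h
          rwa [norm_sub_rev] at h
        have hT1 := hS'T q' hq'S
        obtain ⟨_, _, _, huniq⟩ := circlePt_spec (q' j) (q' k) _ _ _ (hba _ hT1)
          hrpos hdjpos hdkpos tri1 tri2 tri3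
        have hcases := huniq (p2 (Fin.last (N+2))) hxj hxk
        have key : ∀ ε : Bool, p2 (Fin.last (N+2)) = circlePt (q' j) (q' k)
            (d j.castSucc (Fin.last (N+2))) (d k.castSucc (Fin.last (N+2))) ε →
            p ∈ ⋃ q ∈ Finset.image ext (S' ×ˢ (Finset.univ : Finset Bool)), orbitSE2 q := by
          intro ε hx
          have hp2eq : p2 = ext (q', ε) := by
            rw [hext]
            refine PiLp.ext fun i => ?_
            rcases Fin.eq_castSucc_or_eq_last i with ⟨a, rfl⟩ | rfl
            · simp only [PiLp.toLp_apply, Fin.snoc_castSucc]; exact hres a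
            · simp only [PiLp.toLp_apply, Fin.snoc_last]; exact hx
          apply Set.mem_iUnion₂.mpr
          refine ⟨ext (q', ε), Finset.mem_image_of_mem ext
            (Finset.mem_product.mpr ⟨hq'S, Finset.mem_univ ε⟩), θ, hθ, v, ?_⟩
          rw [← hp2eq, hp2, rotAct_inv_right hθ v p]
        rcases hcases with hx | hx
        · exact key true hx
        · exact key false hx
      · intro p hp
        obtain ⟨q, hqS, hq⟩ := Set.mem_iUnion₂.mp hp
        obtain ⟨z, hz, rfl⟩ := Finset.mem_image.mp hqS
        obtain ⟨q', ε⟩ := z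
        exact orbit_sub_T (hextT q' (hS'T q' (Finset.mem_product.mp hz).1) ε) hq

end Work


open Filter MeasureTheory

theorem stmt_9 {N : ℕ} (hN : 2 ≤ N) (G : SimpleGraph (Fin N)) (hG : IsTriangulatedLaman G)
    (d : Fin N → Fin N → ℝ) (hdsym : ∀ i j, d i j = d j i)
    (hdpos : ∀ i j, G.Adj i j → 0 < d i j) (htri : TriangleInequalities G d) :
    {p : Config (Fin N) | p ∈ ConfigSpace G ∧
      ∀ i j, G.Adj i j → ‖p i - p j‖ = d i j}.Nonempty ∧
    (∀ p : Config (Fin N), p ∈ ConfigSpace G → (∀ i j, G.Adj i j → ‖p i - p j‖ = d i j) →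
      StronglyRigid G p) ∧
    ∃ S : Finset (Config (Fin N)), S.card = 2 ^ (N - 2) ∧
      (↑S : Set (Config (Fin N))).Pairwise (fun a b => Disjoint (orbitSE2 a) (orbitSE2 b)) ∧
      {p : Config (Fin N) | p ∈ ConfigSpace G ∧ ∀ i j, G.Adj i j → ‖p i - p j‖ = d i j} =
        ⋃ q ∈ S, orbitSE2 q := by
  refine ⟨?_, ?_, ?_⟩
  · obtain ⟨S, hcard, hdisj, hT⟩ := Work.main hG d hdsym hdpos htri
    have hSne : S.Nonempty := by
      rw [← Finset.card_pos, hcard]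
      positivity
    obtain ⟨q, hq⟩ := hSne
    refine ⟨q, ?_⟩
    rw [Work.set_eq_T G d hdpos, hT]
    exact Set.mem_biUnion hq (Work.mem_orbit_self q)
  · intro p hpc hpd i j k hij hik hjk hcol
    have A := hpd i j hij
    have B := hpd i k hik
    have C := hpd j k hjk
    rcases Work.collinear_dist hcol with h | h | h
    · rw [A, B, C] at h
      have h2 := htri i j k hij hik hjk
      linarith
    · rw [A, B, C] at h
      have h2 := htri k i j hik.symm hjk.symm hij
      rw [hdsym k i, hdsym k j] at h2
      linarith
    · rw [A, B, C] at h
      have h2 := htri j i k hij.symm hjk hik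
      rw [hdsym j i] at h2
      linarith
  · obtain ⟨S, hcard, hdisj, hT⟩ := Work.main hG d hdsym hdpos htri
    exact ⟨S, hcard, hdisj, by rw [Work.set_eq_T G d hdpos]; exact hT⟩


end
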